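/- Let U ⊂ V be finite subsets of ℤ^d. In the Hilbert space H^V of functions ℤ^d → ℝ supported in V with inner product ⟨f,g⟩ = Σ_x Δf(x)Δg(x), the subspace H^U (functions supported in U) and the subspace Bih(U) of functions in H^V that are discrete biharmonic on U (Δ²f = 0 on U) are orthogonal complements: H^V = H^U ⊕ Bih(U). -/

import Mathlib

open scoped BigOperators

/-- The discrete Laplacian on `ℤ^d`: `Δf(x) = (1/(2d)) Σ_{y∼x} (f(y) − f(x))`. -/
noncomputable def discLap (d : ℕ) (f : (Fin d → ℤ) → ℝ) (x : Fin d → ℤ) : ℝ :=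
  (1 / (2 * (d : ℝ))) *
    ∑ i : Fin d, ((f (x + Pi.single i 1) - f x) + (f (x - Pi.single i 1) - f x))

variable {d : ℕ}

lemma tsum_shift (f h : (Fin d → ℤ) → ℝ) (v : Fin d → ℤ) :
    ∑' x, f (x + v) * h x = ∑' x, f x * h (x - v) := by
  have := (Equiv.addRight v).tsum_eq (fun x => f x * h (x - v))
  simpa using this

lemma summable_shift (f h : (Fin d → ℤ) → ℝ) (S : Finset (Fin d → ℤ))
    (hf : ∀ x ∉ S, f x = 0) (v : Fin d → ℤ) (a : ℝ) :
    Summable fun x => a * (f (x + v) * h x) := by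
  apply summable_of_ne_finset_zero (s := S.image (fun y => y - v))
  intro x hx
  have hfx : f (x + v) = 0 := by
    apply hf
    intro hm
    exact hx (Finset.mem_image.2 ⟨x + v, hm, by simp⟩)
  simp [hfx]

lemma summable_fsupp (f : (Fin d → ℤ) → ℝ) (S : Finset (Fin d → ℤ))
    (hf : ∀ x ∉ S, f x = 0) (h : (Fin d → ℤ) → ℝ) (a : ℝ) :
    Summable fun x => a * (f x * h x) := by
  apply summable_of_ne_finset_zero (s := S)
  intro x hx
  simp [hf x hx]

lemma tsum_discLap_mul (f h : (Fin d → ℤ) → ℝ) (S : Finset (Fin d → ℤ))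
    (hf : ∀ x ∉ S, f x = 0) :
    ∑' x, discLap d f x * h x
      = ∑ i : Fin d, (1 / (2 * (d:ℝ))) *
          ((∑' x, f (x + Pi.single i 1) * h x) + (∑' x, f (x - Pi.single i 1) * h x)
            - 2 * ∑' x, f x * h x) := by
  have key : ∀ x, discLap d f x * h x
      = ∑ i : Fin d, ((1/(2*(d:ℝ))) * (f (x + Pi.single i 1) * h x)
          + (1/(2*(d:ℝ))) * (f (x - Pi.single i 1) * h x)
          - (1/(2*(d:ℝ))) * (2 * (f x * h x))) := by
    intro x
    simp only [discLap]
    rw [Finset.mul_sum, Finset.sum_mul]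
    exact Finset.sum_congr rfl (fun i _ => by ring)
  rw [tsum_congr key, Summable.tsum_finsetSum (fun i _ => ?_)]
  · apply Finset.sum_congr rfl
    intro i _
    have s1 := summable_shift f h S hf (Pi.single i 1) (1/(2*(d:ℝ)))
    have s2 : Summable fun x => (1/(2*(d:ℝ))) * (f (x - Pi.single i 1) * h x) := by
      have := summable_shift f h S hf (-Pi.single i 1) (1/(2*(d:ℝ)))
      simpa [sub_eq_add_neg] using this
    have s3 := summable_fsupp f S hf h (2*(1/(2*(d:ℝ))))
    have s3' : Summable fun x => (1/(2*(d:ℝ))) * (2 * (f x * h x)) := by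
      simpa [mul_assoc, mul_comm, mul_left_comm] using s3
    rw [Summable.tsum_sub (s1.add s2) s3', Summable.tsum_add s1 s2, tsum_mul_left, tsum_mul_left, tsum_mul_left, tsum_mul_left]
    ring
  · have s1 := summable_shift f h S hf (Pi.single i 1) (1/(2*(d:ℝ)))
    have s2 : Summable fun x => (1/(2*(d:ℝ))) * (f (x - Pi.single i 1) * h x) := by
      have := summable_shift f h S hf (-Pi.single i 1) (1/(2*(d:ℝ)))
      simpa [sub_eq_add_neg] using this
    have s3 := summable_fsupp f S hf h (2*(1/(2*(d:ℝ))))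
    have s3' : Summable fun x => (1/(2*(d:ℝ))) * (2 * (f x * h x)) := by
      simpa [mul_assoc, mul_comm, mul_left_comm] using s3
    exact (s1.add s2).sub s3'

lemma tsum_mul_discLap (f h : (Fin d → ℤ) → ℝ) (S : Finset (Fin d → ℤ))
    (hf : ∀ x ∉ S, f x = 0) :
    ∑' x, f x * discLap d h x
      = ∑ i : Fin d, (1 / (2 * (d:ℝ))) *
          ((∑' x, f x * h (x + Pi.single i 1)) + (∑' x, f x * h (x - Pi.single i 1))
            - 2 * ∑' x, f x * h x) := by
  have key : ∀ x, f x * discLap d h x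
      = ∑ i : Fin d, ((1/(2*(d:ℝ))) * (f x * h (x + Pi.single i 1))
          + (1/(2*(d:ℝ))) * (f x * h (x - Pi.single i 1))
          - (1/(2*(d:ℝ))) * (2 * (f x * h x))) := by
    intro x
    simp only [discLap]
    rw [Finset.mul_sum, Finset.mul_sum]
    exact Finset.sum_congr rfl (fun i _ => by ring)
  rw [tsum_congr key, Summable.tsum_finsetSum (fun i _ => ?_)]
  · apply Finset.sum_congr rfl
    intro i _
    have s1 := summable_fsupp f S hf (fun x => h (x + Pi.single i 1)) (1/(2*(d:ℝ)))
    have s2 := summable_fsupp f S hf (fun x => h (x - Pi.single i 1)) (1/(2*(d:ℝ)))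
    have s3 : Summable fun x => (1/(2*(d:ℝ))) * (2 * (f x * h x)) := by
      simpa [mul_assoc, mul_comm, mul_left_comm] using
        summable_fsupp f S hf h (2*(1/(2*(d:ℝ))))
    rw [Summable.tsum_sub (s1.add s2) s3, Summable.tsum_add s1 s2, tsum_mul_left, tsum_mul_left, tsum_mul_left, tsum_mul_left]
    ring
  · have s1 := summable_fsupp f S hf (fun x => h (x + Pi.single i 1)) (1/(2*(d:ℝ)))
    have s2 := summable_fsupp f S hf (fun x => h (x - Pi.single i 1)) (1/(2*(d:ℝ)))
    have s3 : Summable fun x => (1/(2*(d:ℝ))) * (2 * (f x * h x)) := by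
      simpa [mul_assoc, mul_comm, mul_left_comm] using
        summable_fsupp f S hf h (2*(1/(2*(d:ℝ))))
    exact (s1.add s2).sub s3

lemma sum_by_parts (f h : (Fin d → ℤ) → ℝ) (S : Finset (Fin d → ℤ))
    (hf : ∀ x ∉ S, f x = 0) :
    ∑' x, discLap d f x * h x = ∑' x, f x * discLap d h x := by
  rw [tsum_discLap_mul f h S hf, tsum_mul_discLap f h S hf]
  apply Finset.sum_congr rfl
  intro i _
  have h1 : ∑' x, f (x + Pi.single i 1) * h x = ∑' x, f x * h (x - Pi.single i 1) :=
    tsum_shift f h (Pi.single i 1)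
  have h2 : ∑' x, f (x - Pi.single i 1) * h x = ∑' x, f x * h (x + Pi.single i 1) := by
    have := tsum_shift f h (-Pi.single i 1)
    simpa [sub_eq_add_neg] using this
  rw [h1, h2]
  ring

noncomputable def nbhd (S : Finset (Fin d → ℤ)) : Finset (Fin d → ℤ) :=
  S ∪ Finset.univ.biUnion (fun i : Fin d =>
    S.image (fun y => y - Pi.single i 1) ∪ S.image (fun y => y + Pi.single i 1))

lemma discLap_eq_zero_outside (f : (Fin d → ℤ) → ℝ) (S : Finset (Fin d → ℤ))
    (hf : ∀ x ∉ S, f x = 0) : ∀ x ∉ nbhd S, discLap d f x = 0 := by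
  intro x hx
  have hxS : x ∉ S := fun h => hx (Finset.mem_union_left _ h)
  have h1 : ∀ i : Fin d, f (x + Pi.single i 1) = 0 := by
    intro i
    apply hf
    intro hm
    apply hx
    apply Finset.mem_union_right
    refine Finset.mem_biUnion.2 ⟨i, Finset.mem_univ _, Finset.mem_union_left _ ?_⟩
    exact Finset.mem_image.2 ⟨_, hm, by simp⟩
  have h2 : ∀ i : Fin d, f (x - Pi.single i 1) = 0 := by
    intro i
    apply hf
    intro hm
    apply hx
    apply Finset.mem_union_right
    refine Finset.mem_biUnion.2 ⟨i, Finset.mem_univ _, Finset.mem_union_right _ ?_⟩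
    exact Finset.mem_image.2 ⟨_, hm, by simp⟩
  simp [discLap, hf x hxS, h1, h2]

lemma discLap_add (f g : (Fin d → ℤ) → ℝ) (x : Fin d → ℤ) :
    discLap d (fun y => f y + g y) x = discLap d f x + discLap d g x := by
  simp only [discLap, ← mul_add, ← Finset.sum_add_distrib]
  congr 1
  exact Finset.sum_congr rfl (fun i _ => by ring)

lemma discLap_sub (f g : (Fin d → ℤ) → ℝ) (x : Fin d → ℤ) :
    discLap d (fun y => f y - g y) x = discLap d f x - discLap d g x := by
  simp only [discLap, ← mul_sub, ← Finset.sum_sub_distrib]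
  congr 1
  exact Finset.sum_congr rfl (fun i _ => by ring)

lemma discLap_smul (a : ℝ) (f : (Fin d → ℤ) → ℝ) (x : Fin d → ℤ) :
    discLap d (fun y => a * f y) x = a * discLap d f x := by
  simp only [discLap, Finset.mul_sum]
  exact Finset.sum_congr rfl (fun i _ => by ring)

lemma key_zero (hd : 0 < d) (U : Finset (Fin d → ℤ)) (g : (Fin d → ℤ) → ℝ)
    (hg : ∀ x ∉ U, g x = 0) (hbi : ∀ x ∈ U, discLap d (discLap d g) x = 0) :
    ∀ x, g x = 0 := by
  -- Step 1: energy is zero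
  have E1 : ∑' x, discLap d g x * discLap d g x = 0 := by
    rw [sum_by_parts g (discLap d g) U hg,
      tsum_eq_sum (s := U) (fun x hx => by rw [hg x hx, zero_mul])]
    exact Finset.sum_eq_zero (fun x hx => by rw [hbi x hx, mul_zero])
  have hsumE : Summable (fun x => discLap d g x * discLap d g x) :=
    summable_of_ne_finset_zero (s := nbhd U)
      (fun y hy => by rw [discLap_eq_zero_outside g U hg y hy, zero_mul])
  have hLap : ∀ x, discLap d g x = 0 := by
    intro x
    have h1 := Summable.le_tsum hsumE x (fun j _ => mul_self_nonneg _)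
    rw [E1] at h1
    have h2 := mul_self_nonneg (discLap d g x)
    exact mul_self_eq_zero.mp (le_antisymm h1 h2)
  -- Step 2: second energy identity
  have E2 : ∑' x, g x * discLap d g x = 0 := by
    rw [tsum_congr (fun x => by rw [hLap x, mul_zero] : ∀ x, g x * discLap d g x = 0)]
    exact tsum_zero
  rw [tsum_mul_discLap g g U hg] at E2
  set S0 : ℝ := ∑' x, g x * g x with hS0
  set P : Fin d → ℝ := fun i => ∑' x, g x * g (x + Pi.single i 1) with hP
  -- Q i = P i
  have hPQ : ∀ i, (∑' x, g x * g (x - Pi.single i 1)) = P i := by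
    intro i
    rw [← tsum_shift g g (Pi.single i 1)]
    exact tsum_congr (fun x => mul_comm _ _)
  -- the squared-difference sums
  have hRsummable : ∀ i : Fin d, Summable (fun x =>
      (g (x + Pi.single i 1) - g x) * (g (x + Pi.single i 1) - g x)) := by
    intro i
    apply summable_of_ne_finset_zero (s := U ∪ U.image (fun y => y - Pi.single i 1))
    intro x hx
    have hx1 : g x = 0 := hg x (fun h => hx (Finset.mem_union_left _ h))
    have hx2 : g (x + Pi.single i 1) = 0 := by
      apply hg
      intro h
      exact hx (Finset.mem_union_right _ (Finset.mem_image.2 ⟨_, h, by simp⟩))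
    rw [hx1, hx2]; ring
  have hReq : ∀ i : Fin d, (∑' x,
      (g (x + Pi.single i 1) - g x) * (g (x + Pi.single i 1) - g x)) = 2*S0 - 2*P i := by
    intro i
    have sa : Summable fun x => (1:ℝ) * (g (x + Pi.single i 1) * g (x + Pi.single i 1)) :=
      summable_shift g (fun x => g (x + Pi.single i 1)) U hg (Pi.single i 1) 1
    have sa' : Summable fun x : Fin d → ℤ => g (x + Pi.single i 1) * g (x + Pi.single i 1) := by
      simpa using sa
    have sb : Summable fun x : Fin d → ℤ => g x * g x := by
      simpa using summable_fsupp g U hg g 1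
    have sab : Summable fun x => (2:ℝ) * (g (x + Pi.single i 1) * g x) :=
      summable_shift g g U hg (Pi.single i 1) 2
    have expand : ∀ x, (g (x + Pi.single i 1) - g x) * (g (x + Pi.single i 1) - g x)
        = (g (x + Pi.single i 1) * g (x + Pi.single i 1) + g x * g x)
          - 2 * (g (x + Pi.single i 1) * g x) := by intro x; ring
    rw [tsum_congr expand, Summable.tsum_sub (sa'.add sb) sab, Summable.tsum_add sa' sb, tsum_mul_left]
    have e1 : ∑' x : Fin d → ℤ, g (x + Pi.single i 1) * g (x + Pi.single i 1) = S0 := by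
      simpa using (Equiv.addRight (Pi.single i 1)).tsum_eq (fun x => g x * g x)
    have e2 : ∑' x, g (x + Pi.single i 1) * g x = P i :=
      tsum_congr (fun x => mul_comm _ _)
    rw [e1, e2]
    ring
  have hPle : ∀ i : Fin d, P i ≤ S0 := by
    intro i
    have := tsum_nonneg (L := SummationFilter.unconditional _) (fun x => mul_self_nonneg
      (g (x + Pi.single i 1) - g x))
    rw [hReq i] at this
    linarith
  -- conclude each R i = 0
  have hsum0 : ∑ i : Fin d, (S0 - P i) = 0 := by
    have hc : (1 / (2 * (d:ℝ))) * (-2) ≠ 0 := by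
      have : (0:ℝ) < d := by exact_mod_cast hd
      intro h
      rcases mul_eq_zero.mp h with h | h
      · rw [div_eq_zero_iff] at h
        rcases h with h | h
        · norm_num at h
        · nlinarith
      · norm_num at h
    have htrans : ∑ i : Fin d, (1 / (2 * (d:ℝ))) *
        ((∑' x, g x * g (x + Pi.single i 1)) + (∑' x, g x * g (x - Pi.single i 1))
          - 2 * ∑' x, g x * g x)
        = (1 / (2 * (d:ℝ))) * (-2) * ∑ i : Fin d, (S0 - P i) := by
      rw [Finset.mul_sum]
      apply Finset.sum_congr rfl
      intro i _
      rw [hPQ i]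
      ring
    rw [htrans] at E2
    exact (mul_eq_zero.mp E2).resolve_left hc
  have hPeq : ∀ i : Fin d, S0 - P i = 0 := by
    have := (Finset.sum_eq_zero_iff_of_nonneg
      (fun i _ => by have := hPle i; linarith)).mp hsum0
    exact fun i => this i (Finset.mem_univ i)
  -- shift invariance in direction 0
  set i0 : Fin d := ⟨0, hd⟩ with hi0
  have hR0 : (∑' x, (g (x + Pi.single i0 1) - g x) * (g (x + Pi.single i0 1) - g x)) = 0 := by
    rw [hReq i0]
    have := hPeq i0
    linarith
  have hshift : ∀ x, g (x + Pi.single i0 1) = g x := by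
    intro x
    have h1 := Summable.le_tsum (hRsummable i0) x (fun j _ => mul_self_nonneg _)
    rw [hR0] at h1
    have h2 := mul_self_nonneg (g (x + Pi.single i0 1) - g x)
    have := mul_self_eq_zero.mp (le_antisymm h1 h2)
    linarith
  -- full shift invariance along direction 0
  have hall : ∀ (n : ℤ) (x : Fin d → ℤ), g (x + Pi.single i0 n) = g x := by
    intro n
    induction n using Int.induction_on with
    | zero => intro x; simp
    | succ k ih =>
        intro x
        have : x + Pi.single i0 ((k:ℤ) + 1) = (x + Pi.single i0 (k:ℤ)) + Pi.single i0 1 := by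
          rw [add_assoc, ← Pi.single_add]
        rw [this, hshift, ih]
    | pred k ih =>
        intro x
        have key : (x + Pi.single i0 (-(k:ℤ) - 1)) + Pi.single i0 1 = x + Pi.single i0 (-(k:ℤ)) := by
          rw [add_assoc, ← Pi.single_add]
          norm_num
        have := hshift (x + Pi.single i0 (-(k:ℤ) - 1))
        rw [key, ih] at this
        exact this.symm
  -- conclude
  intro x
  obtain ⟨m, hm⟩ := Infinite.exists_notMem_finset (U.image (fun y => y i0 - x i0))
  have hnot : x + Pi.single i0 m ∉ U := by
    intro hmem
    apply hm
    exact Finset.mem_image.2 ⟨_, hmem, by simp⟩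
  rw [← hall m x, hg _ hnot]

noncomputable def extFun (U : Finset (Fin d → ℤ)) (c : ↥U → ℝ) : (Fin d → ℤ) → ℝ :=
  fun x => if h : x ∈ U then c ⟨x, h⟩ else 0


/-- For finite `U ⊆ V ⊂ ℤ^d`, in the space of functions supported in `V` with inner
product `⟨f,g⟩ = Σ_x Δf(x)Δg(x)`, the subspace of functions supported in `U` and the
subspace of functions discrete biharmonic on `U` are orthogonal complements:
`H^V = H^U ⊕ Bih(U)`. -/
theorem discrete_space_decomposition (d : ℕ) (U V : Finset (Fin d → ℤ)) (hUV : U ⊆ V) :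
    (∀ g b : (Fin d → ℤ) → ℝ, (∀ x, x ∉ U → g x = 0) → (∀ x, x ∉ V → b x = 0) →
      (∀ x, x ∈ U → discLap d (discLap d b) x = 0) →
      (∑' x : Fin d → ℤ, discLap d g x * discLap d b x) = 0) ∧
    (∀ f : (Fin d → ℤ) → ℝ, (∀ x, x ∉ V → f x = 0) →
      ∃ g b : (Fin d → ℤ) → ℝ, (∀ x, x ∉ U → g x = 0) ∧ (∀ x, x ∉ V → b x = 0) ∧
        (∀ x, x ∈ U → discLap d (discLap d b) x = 0) ∧ f = g + b) := by
  constructor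
  · intro g b hg hb hbih
    rw [sum_by_parts g (discLap d b) U (fun x hx => hg x hx),
      tsum_eq_sum (s := U) (fun x hx => by rw [hg x hx, zero_mul])]
    exact Finset.sum_eq_zero (fun x hx => by rw [hbih x hx, mul_zero])
  · intro f hf
    by_cases hd : d = 0
    · subst hd
      exact ⟨0, f, fun x _ => rfl, hf, fun x _ => by simp [discLap], (zero_add f).symm⟩
    · have hd' : 0 < d := Nat.pos_of_ne_zero hd
      -- the linear endomorphism c ↦ Δ²(ext c)|U
      let T : (↥U → ℝ) →ₗ[ℝ] (↥U → ℝ) :=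
        { toFun := fun c u => discLap d (discLap d (extFun U c)) u
          map_add' := by
            intro c c'
            funext u
            have he : extFun U (c + c') = fun x => extFun U c x + extFun U c' x := by
              funext x
              by_cases h : x ∈ U <;> simp [extFun, h]
            have h1 : discLap d (extFun U (c + c'))
                = fun y => discLap d (extFun U c) y + discLap d (extFun U c') y := by
              funext y
              rw [he, discLap_add]
            show discLap d (discLap d (extFun U (c + c'))) u.1
                = discLap d (discLap d (extFun U c)) u.1 + discLap d (discLap d (extFun U c')) u.1
            rw [h1, discLap_add]
          map_smul' := by
            intro a c
            funext u
            have he : extFun U (a • c) = fun x => a * extFun U c x := by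
              funext x
              by_cases h : x ∈ U <;> simp [extFun, h]
            have h1 : discLap d (extFun U (a • c))
                = fun y => a * discLap d (extFun U c) y := by
              funext y
              rw [he, discLap_smul]
            show discLap d (discLap d (extFun U (a • c))) u.1
                = a * discLap d (discLap d (extFun U c)) u.1
            rw [h1, discLap_smul] }
      have hinj : Function.Injective T := by
        rw [injective_iff_map_eq_zero]
        intro c hc
        have hgz : ∀ x ∉ U, extFun U c x = 0 := fun x hx => dif_neg hx
        have hbi : ∀ x ∈ U, discLap d (discLap d (extFun U c)) x = 0 := by
          intro x hx
          exact congrFun hc ⟨x, hx⟩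
        have hzero := key_zero hd' U (extFun U c) hgz hbi
        funext u
        have := hzero u.1
        rwa [extFun, dif_pos u.2, Subtype.coe_eta] at this
      have hsurj : Function.Surjective T := (LinearMap.injective_iff_surjective).mp hinj
      obtain ⟨c, hc⟩ := hsurj (fun u => discLap d (discLap d f) u)
      refine ⟨extFun U c, fun x => f x - extFun U c x, fun x hx => dif_neg hx, ?_, ?_, ?_⟩
      · intro x hx
        show f x - extFun U c x = 0
        rw [hf x hx, extFun, dif_neg (fun h => hx (hUV h)), sub_zero]
      · intro x hx
        have hl1 : discLap d (fun z => f z - extFun U c z)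
            = fun y => discLap d f y - discLap d (extFun U c) y := by
          funext y
          exact discLap_sub f (extFun U c) y
        rw [hl1, discLap_sub]
        have := congrFun hc ⟨x, hx⟩
        simp only [T, LinearMap.coe_mk, AddHom.coe_mk] at this
        rw [this]
        ring
      · funext x
        simp
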